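/- arXiv:1706.06019 — 3 statements merged into one kernel-verified Lean document; each statement's English description precedes it below -/
import Mathlib

section
/- Let V₀ → V₁ → ... → V_N be a persistence module (a finite sequence of finite-dimensional vector spaces and linear maps), with composites f^{i,j} : V_i → V_j for i ≤ j (f^{i,i} = id). Define d^{i,j} = dim Im f^{i,j} for 0 ≤ i ≤ j ≤ N and d^{i,j} = 0 otherwise. Then for all 0 ≤ i ≤ j ≤ N, the quantity N^{i,j} := d^{i,j} - d^{i-1,j} - d^{i,j+1} + d^{i-1,j+1} is nonnegative. -/
open Module

/-- The composite structure map `f^{i,i+k} : V i → V (i+k)` of a persistence module,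
with `f^{i,i} = id`. -/
noncomputable def pcomp {F : Type*} [Field F] {V : ℕ → Type*} [∀ i, AddCommGroup (V i)]
    [∀ i, Module F (V i)] (f : ∀ i, V i →ₗ[F] V (i + 1)) (i : ℕ) :
    ∀ k, V i →ₗ[F] V (i + k)
  | 0 => LinearMap.id
  | (k + 1) => f (i + k) ∘ₗ pcomp f i k

/-- The rank function `d^{i,j} = dim Im f^{i,j}` of a persistence module `V₀ → ... → V_N`,
extended by `0` for out-of-range indices. -/
noncomputable def prank {F : Type*} [Field F] {V : ℕ → Type*} [∀ i, AddCommGroup (V i)]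
    [∀ i, Module F (V i)] (N : ℕ) (f : ∀ i, V i →ₗ[F] V (i + 1)) (i j : ℤ) : ℕ :=
  if 0 ≤ i ∧ i ≤ j ∧ j ≤ N then
    finrank F (LinearMap.range (pcomp f i.toNat (j - i).toNat))
  else 0

section Aux
variable {F : Type*} [Field F]

/-- Dimension of kernel of a composite with an injective map is at most dim ker. -/
lemma finrank_ker_comp_le {M P Q : Type*} [AddCommGroup M] [Module F M]
    [AddCommGroup P] [Module F P] [AddCommGroup Q] [Module F Q]
    [FiniteDimensional F M] [FiniteDimensional F P]
    (T : M →ₗ[F] Q) (ι : P →ₗ[F] M) (hι : Function.Injective ι) :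
    finrank F (LinearMap.ker (T ∘ₗ ι)) ≤ finrank F (LinearMap.ker T) := by
  rw [LinearMap.ker_comp]
  calc finrank F (Submodule.comap ι (LinearMap.ker T))
      = finrank F (Submodule.map ι (Submodule.comap ι (LinearMap.ker T))) :=
        (LinearEquiv.finrank_eq (Submodule.equivMapOfInjective ι hι _))
    _ ≤ finrank F (LinearMap.ker T) :=
        Submodule.finrank_mono (Submodule.map_comap_le _ _)

/-- Key abstract lemma: for submodules `B ≤ A` and a linear map `g`,
`dim g(A) + dim B ≤ dim A + dim g(B)`. -/
lemma key_ineq {W W' : Type*} [AddCommGroup W] [Module F W] [AddCommGroup W'] [Module F W']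
    [FiniteDimensional F W] (g : W →ₗ[F] W') (A B : Submodule F W) (hBA : B ≤ A) :
    finrank F (Submodule.map g A) + finrank F B ≤
      finrank F A + finrank F (Submodule.map g B) := by
  have hA : finrank F (LinearMap.range (g ∘ₗ A.subtype))
      + finrank F (LinearMap.ker (g ∘ₗ A.subtype)) = finrank F A :=
    LinearMap.finrank_range_add_finrank_ker _
  have hB : finrank F (LinearMap.range (g ∘ₗ B.subtype))
      + finrank F (LinearMap.ker (g ∘ₗ B.subtype)) = finrank F B :=
    LinearMap.finrank_range_add_finrank_ker _
  have hrA : LinearMap.range (g ∘ₗ A.subtype) = Submodule.map g A := by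
    rw [LinearMap.range_comp, Submodule.range_subtype]
  have hrB : LinearMap.range (g ∘ₗ B.subtype) = Submodule.map g B := by
    rw [LinearMap.range_comp, Submodule.range_subtype]
  rw [hrA] at hA; rw [hrB] at hB
  have hcomp : (g ∘ₗ B.subtype) = (g ∘ₗ A.subtype) ∘ₗ Submodule.inclusion hBA := by
    ext x; rfl
  have hk : finrank F (LinearMap.ker (g ∘ₗ B.subtype))
      ≤ finrank F (LinearMap.ker (g ∘ₗ A.subtype)) := by
    rw [hcomp]
    exact finrank_ker_comp_le _ _ (Submodule.inclusion_injective hBA)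
  omega

variable {V : ℕ → Type*} [∀ i, AddCommGroup (V i)] [∀ i, Module F (V i)]

/-- Cast equivalence between `V m` and `V n` when `m = n`. -/
def vcast : ∀ {m n : ℕ}, m = n → (V m ≃ₗ[F] V n)
  | _, _, rfl => LinearEquiv.refl F _

lemma vcast_comm (f : ∀ i, V i →ₗ[F] V (i + 1)) {m n : ℕ} (h : m = n) :
    f n ∘ₗ (vcast (V := V) h).toLinearMap
      = (vcast (V := V) (congrArg Nat.succ h)).toLinearMap ∘ₗ f m := by
  subst h; rfl

lemma pcomp_shift (f : ∀ i, V i →ₗ[F] V (i + 1)) (a k : ℕ) :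
    pcomp f a (k + 1)
      = (vcast (V := V) (Nat.succ_add a k)).toLinearMap ∘ₗ pcomp f (a + 1) k ∘ₗ f a := by
  induction k with
  | zero => ext x; rfl
  | succ k ih =>
      show f (a + (k+1)) ∘ₗ pcomp f a (k+1) = _
      rw [ih]
      show (f ((a+k)+1) ∘ₗ (vcast (V := V) (Nat.succ_add a k)).toLinearMap)
          ∘ₗ (pcomp f (a+1) k ∘ₗ f a) = _
      rw [vcast_comm f (Nat.succ_add a k)]
      show _ = (vcast (V := V) (Nat.succ_add a (k+1))).toLinearMap
          ∘ₗ ((f ((a+1)+k) ∘ₗ pcomp f (a+1) k) ∘ₗ f a)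
      rfl

lemma finrank_range_vcast {P : Type*} [AddCommGroup P] [Module F P] {m n : ℕ} (h : m = n)
    (T : P →ₗ[F] V m) :
    finrank F (LinearMap.range ((vcast (V := V) h).toLinearMap ∘ₗ T))
      = finrank F (LinearMap.range T) := by
  subst h; rfl

lemma finrank_range_congr (f : ∀ i, V i →ₗ[F] V (i + 1)) {a a' k k' : ℕ}
    (ha : a = a') (hk : k = k') :
    finrank F (LinearMap.range (pcomp f a k))
      = finrank F (LinearMap.range (pcomp f a' k')) := by
  subst ha; subst hk; rfl

lemma finrank_range_pcomp_succ (f : ∀ i, V i →ₗ[F] V (i + 1)) (a k : ℕ) :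
    finrank F (LinearMap.range (pcomp f a (k + 1)))
      = finrank F (LinearMap.range (pcomp f (a + 1) k ∘ₗ f a)) := by
  rw [pcomp_shift]
  exact finrank_range_vcast _ _

end Aux

/-- For a persistence module `V₀ → ... → V_N` of finite-dimensional vector spaces, the
quantity `N^{i,j} = d^{i,j} - d^{i-1,j} - d^{i,j+1} + d^{i-1,j+1}` is nonnegative for all
`0 ≤ i ≤ j ≤ N`. -/
theorem persistence_interval_multiplicity_nonneg {F : Type*} [Field F] {V : ℕ → Type*}
    [∀ i, AddCommGroup (V i)] [∀ i, Module F (V i)] [∀ i, FiniteDimensional F (V i)]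
    (N : ℕ) (f : ∀ i, V i →ₗ[F] V (i + 1)) (i j : ℤ)
    (h0 : 0 ≤ i) (hij : i ≤ j) (hjN : j ≤ N) :
    (0 : ℤ) ≤ (prank N f i j : ℤ) - (prank N f (i - 1) j : ℤ)
      - (prank N f i (j + 1) : ℤ) + (prank N f (i - 1) (j + 1) : ℤ) := by
  by_cases hi1 : 1 ≤ i
  · -- i ≥ 1
    obtain ⟨a, ha⟩ : ∃ a, i.toNat = a + 1 := ⟨i.toNat - 1, by omega⟩
    set k := (j - i).toNat with hk
    set p := pcomp f (a + 1) k with hp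
    set g := f (a + 1 + k) with hg
    set A := LinearMap.range p with hA
    set B := LinearMap.range (p ∘ₗ f a) with hB
    have hBA : B ≤ A := LinearMap.range_comp_le_range _ _
    have hd1 : prank N f i j = finrank F A := by
      rw [prank, if_pos ⟨h0, hij, hjN⟩]
      exact finrank_range_congr f ha rfl
    have hd2 : prank N f (i - 1) j = finrank F B := by
      rw [prank, if_pos ⟨by omega, by omega, by omega⟩,
        finrank_range_congr f (show (i - 1).toNat = a by omega)
          (show (j - (i - 1)).toNat = k + 1 by omega),
        finrank_range_pcomp_succ]
    have hmapA : finrank F (Submodule.map g A)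
        = finrank F (LinearMap.range (pcomp f (a + 1) (k + 1))) := by
      rw [show pcomp f (a + 1) (k + 1) = g ∘ₗ p from rfl, LinearMap.range_comp]
      rfl
    have hmapB : finrank F (Submodule.map g B)
        = finrank F (LinearMap.range (pcomp f (a + 1) (k + 1) ∘ₗ f a)) := by
      rw [show pcomp f (a + 1) (k + 1) = g ∘ₗ p from rfl, LinearMap.comp_assoc,
        LinearMap.range_comp]
      rfl
    have hkey := key_ineq g A B hBA
    by_cases hjN' : j + 1 ≤ N
    · have hd3 : prank N f i (j + 1) = finrank F (Submodule.map g A) := by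
        rw [prank, if_pos ⟨h0, by omega, hjN'⟩,
          finrank_range_congr f ha (show (j + 1 - i).toNat = k + 1 by omega), hmapA]
      have hd4 : prank N f (i - 1) (j + 1) = finrank F (Submodule.map g B) := by
        rw [prank, if_pos ⟨by omega, by omega, by omega⟩,
          finrank_range_congr f (show (i - 1).toNat = a by omega)
            (show (j + 1 - (i - 1)).toNat = k + 2 by omega),
          finrank_range_pcomp_succ, hmapB]
      rw [hd1, hd2, hd3, hd4]
      omega
    · have hd3 : prank N f i (j + 1) = 0 := by rw [prank, if_neg]; omega
      have hd4 : prank N f (i - 1) (j + 1) = 0 := by rw [prank, if_neg]; omega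
      have hle : finrank F B ≤ finrank F A := Submodule.finrank_mono hBA
      rw [hd1, hd2, hd3, hd4]
      omega
  · -- i = 0
    have hd1 : prank N f i j
        = finrank F (LinearMap.range (pcomp f i.toNat (j - i).toNat)) := by
      rw [prank, if_pos ⟨h0, hij, hjN⟩]
    have hd2 : prank N f (i - 1) j = 0 := by rw [prank, if_neg]; omega
    have hd4 : prank N f (i - 1) (j + 1) = 0 := by rw [prank, if_neg]; omega
    by_cases hjN' : j + 1 ≤ N
    · have hd3 : prank N f i (j + 1)
          = finrank F (LinearMap.range (pcomp f i.toNat ((j - i).toNat + 1))) := by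
        rw [prank, if_pos ⟨h0, by omega, hjN'⟩,
          finrank_range_congr f rfl (show (j + 1 - i).toNat = (j - i).toNat + 1 by omega)]
      have hle : prank N f i (j + 1) ≤ prank N f i j := by
        rw [hd1, hd3]
        rw [show pcomp f i.toNat ((j - i).toNat + 1)
            = f (i.toNat + (j - i).toNat) ∘ₗ pcomp f i.toNat (j - i).toNat from rfl,
          LinearMap.range_comp]
        exact Submodule.finrank_map_le _ _
      omega
    · have hd3 : prank N f i (j + 1) = 0 := by rw [prank, if_neg]; omega
      omega
end

section
/- Suppose a persistence module V₀ → V₁ → ... → V_N (finite-dimensional vector spaces, structure maps f^{i,i+1}) is equipped with subspaces W_i ⊆ V_i such that f^{i,i+1}(W_i) ⊆ W_{i+1} for all 0 ≤ i < N. Let g^{i,j} denote the restriction of the composite f^{i,j} to W_i (with codomain W_j). Then there exists a unique multiset M of intervals [a,b] with 0 ≤ a ≤ b ≤ N such that for all 0 ≤ i ≤ j ≤ N, dim Im g^{i,j} equals the number of intervals in M (with multiplicity) containing [i,j]. -/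
open Module

section Aux

variable {F : Type*} [Field F] {V : ℕ → Type*} [∀ i, AddCommGroup (V i)]
    [∀ i, Module F (V i)]

/-- The submodule `f^{i,j}(W_i) ⊆ V j`, defined recursively in `j` (junk `⊥` for `j < i`). -/
noncomputable def Tmod (f : ∀ i, V i →ₗ[F] V (i + 1)) (W : ∀ i, Submodule F (V i)) (i : ℕ) :
    ∀ j, Submodule F (V j)
  | 0 => if h : i = 0 then h ▸ W i else ⊥
  | (j + 1) => if h : i = j + 1 then h ▸ W i else Submodule.map (f j) (Tmod f W i j)

variable (f : ∀ i, V i →ₗ[F] V (i + 1)) (W : ∀ i, Submodule F (V i))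

lemma Tmod_self (i : ℕ) : Tmod f W i i = W i := by
  cases i with
  | zero => simp [Tmod]
  | succ n => simp [Tmod]

lemma Tmod_succ {i j : ℕ} (h : i ≤ j) :
    Tmod f W i (j + 1) = Submodule.map (f j) (Tmod f W i j) := by
  have h' : i ≠ j + 1 := by omega
  simp [Tmod, h']

lemma map_pcomp_eq_Tmod (i : ℕ) : ∀ k, Submodule.map (pcomp f i k) (W i) = Tmod f W i (i + k)
  | 0 => by
      show Submodule.map (pcomp f i 0) (W i) = Tmod f W i i
      rw [Tmod_self]
      simp [pcomp]
  | (k + 1) => by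
      show Submodule.map (pcomp f i (k + 1)) (W i) = Tmod f W i ((i + k) + 1)
      rw [Tmod_succ f W (Nat.le_add_right i k), ← map_pcomp_eq_Tmod i k]
      rw [show pcomp f i (k + 1) = f (i + k) ∘ₗ pcomp f i k from rfl, Submodule.map_comp]

lemma finrank_pcomp_eq {i j : ℕ} (h : i ≤ j) :
    finrank F (Submodule.map (pcomp f i (j - i)) (W i)) = finrank F (Tmod f W i j) := by
  obtain ⟨k, rfl⟩ : ∃ k, j = i + k := ⟨j - i, (Nat.add_sub_cancel' h).symm⟩
  rw [Nat.add_sub_cancel_left, map_pcomp_eq_Tmod]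

lemma Tmod_mono {N i j : ℕ} (hW : ∀ i, i < N → Submodule.map (f i) (W i) ≤ W (i + 1))
    (hiN : i < N) (hij : i + 1 ≤ j) : Tmod f W i j ≤ Tmod f W (i + 1) j := by
  induction j, hij using Nat.le_induction with
  | base =>
      rw [Tmod_succ f W (le_refl i), Tmod_self, Tmod_self]
      exact hW i hiN
  | succ j hij ih =>
      rw [Tmod_succ f W (by omega), Tmod_succ f W hij]
      exact Submodule.map_mono ih

/-- rank-nullity for the image of a submodule. -/
lemma finrank_map_add_finrank_inf_ker {M N : Type*} [AddCommGroup M] [Module F M]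
    [AddCommGroup N] [Module F N] [FiniteDimensional F M] (φ : M →ₗ[F] N)
    (S : Submodule F M) :
    finrank F (Submodule.map φ S) + finrank F (LinearMap.ker φ ⊓ S : Submodule F M)
      = finrank F S := by
  have h1 := LinearMap.finrank_range_add_finrank_ker (φ.domRestrict S)
  rw [LinearMap.range_domRestrict] at h1
  have h2 : LinearMap.ker (φ.domRestrict S) = Submodule.comap S.subtype (LinearMap.ker φ ⊓ S) := by
    rw [LinearMap.ker_domRestrict, Submodule.comap_inf, Submodule.comap_subtype_self, inf_top_eq]
  have h3 : finrank F (LinearMap.ker (φ.domRestrict S))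
      = finrank F (LinearMap.ker φ ⊓ S : Submodule F M) := by
    rw [h2]
    exact (Submodule.comapSubtypeEquivOfLe inf_le_right).finrank_eq
  rw [h3] at h1
  exact h1

end Aux

section Main

variable {F : Type*} [Field F] {V : ℕ → Type*} [∀ i, AddCommGroup (V i)]
    [∀ i, Module F (V i)] [∀ i, FiniteDimensional F (V i)]

variable (f : ∀ i, V i →ₗ[F] V (i + 1)) (W : ∀ i, Submodule F (V i)) (N : ℕ)

/-- `rk i j = dim f^{i,j}(W_i)`. -/
noncomputable def rk (i j : ℕ) : ℕ := finrank F (Tmod f W i j)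

/-- `dk a b = dim (f^{a,b}(W_a) ∩ ker f^{b,b+1})`. -/
noncomputable def dk (a b : ℕ) : ℕ :=
  finrank F (LinearMap.ker (f b) ⊓ Tmod f W a b : Submodule F (V b))

/-- column difference `rk a b - rk a (b+1)` (with `rk a (N+1) = 0` convention). -/
noncomputable def ek (a b : ℕ) : ℕ := if b = N then rk f W a N else dk f W a b

/-- the barcode multiplicity. -/
noncomputable def mk' (a b : ℕ) : ℕ :=
  if a ≤ b ∧ b ≤ N then
    (if a = 0 then ek f W N 0 b else ek f W N a b - ek f W N (a-1) b)
  else 0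

lemma rk_succ {a b : ℕ} (h : a ≤ b) : rk f W a b = rk f W a (b + 1) + dk f W a b := by
  rw [rk, rk, dk, Tmod_succ f W h]
  exact (finrank_map_add_finrank_inf_ker (f b) (Tmod f W a b)).symm

lemma rk_mono (hW : ∀ i, i < N → Submodule.map (f i) (W i) ≤ W (i + 1))
    {i j : ℕ} (hiN : i < N) (hij : i + 1 ≤ j) : rk f W i j ≤ rk f W (i + 1) j :=
  Submodule.finrank_mono (Tmod_mono f W hW hiN hij)

lemma dk_mono (hW : ∀ i, i < N → Submodule.map (f i) (W i) ≤ W (i + 1))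
    {i j : ℕ} (hiN : i < N) (hij : i + 1 ≤ j) : dk f W i j ≤ dk f W (i + 1) j :=
  Submodule.finrank_mono (inf_le_inf_left _ (Tmod_mono f W hW hiN hij))

lemma ek_mono (hW : ∀ i, i < N → Submodule.map (f i) (W i) ≤ W (i + 1))
    {a b : ℕ} (ha : 1 ≤ a) (hab : a ≤ b) (hbN : b ≤ N) :
    ek f W N (a - 1) b ≤ ek f W N a b := by
  have haN : a - 1 < N := by omega
  have hab' : (a - 1) + 1 ≤ b := by omega
  have hsub : (a - 1) + 1 = a := by omega
  by_cases hb : b = N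
  · simp only [ek, if_pos hb, hsub]
    subst hb
    have h := rk_mono f W b hW haN hab'
    rwa [hsub] at h
  · simpa [ek, hb, hsub] using dk_mono f W N hW haN hab'

lemma ek_sum {a j : ℕ} (haj : a ≤ j) (hjN : j ≤ N) :
    ∑ b ∈ Finset.Icc j N, ek f W N a b = rk f W a j := by
  have key : ∀ t j, N - j = t → a ≤ j → j ≤ N →
      ∑ b ∈ Finset.Icc j N, ek f W N a b = rk f W a j := by
    intro t
    induction t with
    | zero =>
        intro j ht haj hjN
        have : j = N := by omega
        subst this
        simp [ek]
    | succ t ih =>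
        intro j ht haj hjN
        have hjN' : j < N := by omega
        have hins : Finset.Icc j N = insert j (Finset.Icc (j + 1) N) := by
          ext x; simp; omega
        rw [hins, Finset.sum_insert (by simp), ih (j + 1) (by omega) (by omega) (by omega)]
        have : ek f W N a j = dk f W a j := by simp [ek, Nat.ne_of_lt hjN']
        rw [this, rk_succ f W haj, Nat.add_comm]
  exact key (N - j) j rfl haj hjN

lemma mk'_sum_inner (hW : ∀ i, i < N → Submodule.map (f i) (W i) ≤ W (i + 1))
    {a j : ℕ} (haj : a ≤ j) (hjN : j ≤ N) :
    ∑ b ∈ Finset.Icc j N, (mk' f W N a b : ℤ)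
      = (rk f W a j : ℤ) - (if a = 0 then 0 else (rk f W (a - 1) j : ℤ)) := by
  by_cases ha : a = 0
  · subst ha
    have hcongr : ∀ b ∈ Finset.Icc j N, (mk' f W N 0 b : ℤ) = (ek f W N 0 b : ℤ) := by
      intro b hb
      rw [Finset.mem_Icc] at hb
      simp [mk', hb.2]
    rw [Finset.sum_congr rfl hcongr, if_pos rfl, ← Nat.cast_sum, ek_sum f W N haj hjN]
    simp
  · have ha1 : 1 ≤ a := by omega
    have hcongr : ∀ b ∈ Finset.Icc j N, (mk' f W N a b : ℤ)
        = (ek f W N a b : ℤ) - (ek f W N (a - 1) b : ℤ) := by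
      intro b hb
      rw [Finset.mem_Icc] at hb
      have hab : a ≤ b := le_trans haj hb.1
      rw [mk', if_pos ⟨hab, hb.2⟩, if_neg ha,
        Nat.cast_sub (ek_mono f W N hW ha1 hab hb.2)]
    rw [Finset.sum_congr rfl hcongr, Finset.sum_sub_distrib, if_neg ha,
      ← Nat.cast_sum, ← Nat.cast_sum, ek_sum f W N haj hjN,
      ek_sum f W N (by omega) hjN]

lemma mk'_sum (hW : ∀ i, i < N → Submodule.map (f i) (W i) ≤ W (i + 1))
    {i j : ℕ} (hij : i ≤ j) (hjN : j ≤ N) :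
    ∑ a ∈ Finset.range (i + 1), ∑ b ∈ Finset.Icc j N, (mk' f W N a b : ℤ)
      = (rk f W i j : ℤ) := by
  induction i with
  | zero =>
      rw [Finset.sum_range_one, mk'_sum_inner f W N hW hij hjN]
      simp
  | succ i ih =>
      rw [Finset.sum_range_succ, ih (by omega), mk'_sum_inner f W N hW hij hjN,
        if_neg (Nat.succ_ne_zero i), Nat.add_sub_cancel]
      ring

set_option linter.unusedSectionVars false in
lemma recover (μ : ℕ → ℕ → ℕ)
    (hμ' : ∀ i j, i ≤ j → j ≤ N →
      rk f W i j = ∑ a ∈ Finset.range (i + 1), ∑ b ∈ Finset.Icc j N, μ a b)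
    {a b : ℕ} (hab : a ≤ b) (hbN : b ≤ N) :
    (μ a b : ℤ) =
      ((rk f W a b : ℤ) - (if a = 0 then 0 else (rk f W (a - 1) b : ℤ)))
      - (if b = N then 0 else
          ((rk f W a (b + 1) : ℤ) - (if a = 0 then 0 else (rk f W (a - 1) (b + 1) : ℤ)))) := by
  set col : ℕ → ℕ → ℕ := fun a j => ∑ b ∈ Finset.Icc j N, μ a b with hcol
  have step1 : ∀ a j, a ≤ j → j ≤ N →
      (col a j : ℤ) = (rk f W a j : ℤ) - (if a = 0 then 0 else (rk f W (a - 1) j : ℤ)) := by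
    intro a j haj hjN
    by_cases ha : a = 0
    · subst ha
      rw [if_pos rfl]
      have := hμ' 0 j haj hjN
      rw [Finset.sum_range_one] at this
      rw [hcol]
      simp [← this]
    · rw [if_neg ha]
      have h1 := hμ' a j haj hjN
      have h2 := hμ' (a - 1) j (by omega) hjN
      rw [Finset.sum_range_succ] at h1
      rw [show (a - 1) + 1 = a from by omega] at h2
      rw [hcol]
      simp only
      omega
  have step2 : (col a b : ℤ) = (μ a b : ℤ) + (col a (b + 1) : ℤ) := by
    have hins : Finset.Icc b N = insert b (Finset.Icc (b + 1) N) := by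
      ext x; simp; omega
    rw [hcol]
    simp only
    rw [hins, Finset.sum_insert (by simp)]
    push_cast
    ring
  have hb1 := step1 a b hab hbN
  by_cases hbn : b = N
  · have hempty : col a (b + 1) = 0 := by
      rw [hcol]
      simp only
      rw [Finset.Icc_eq_empty (by omega), Finset.sum_empty]
    rw [if_pos hbn]
    rw [hempty] at step2
    omega
  · have hb2 := step1 a (b + 1) (by omega) (by omega)
    rw [if_neg hbn]
    omega

end Main

open Module in
/-- **Barcode decomposition for a persistence submodule.** If a persistence module
`V₀ → ... → V_N` is equipped with subspaces `W_i ⊆ V_i` preserved by the structure maps,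
and `g^{i,j}` denotes the restriction of `f^{i,j}` to `W_i`, then there is a unique multiset
`m` of intervals `[a,b] ⊆ [0,N]` such that `dim Im g^{i,j}` equals the number of intervals
of `m` (with multiplicity) containing `[i,j]`, for all `0 ≤ i ≤ j ≤ N`. -/
theorem persistence_submodule_barcode {F : Type*} [Field F] {V : ℕ → Type*}
    [∀ i, AddCommGroup (V i)] [∀ i, Module F (V i)] [∀ i, FiniteDimensional F (V i)]
    (N : ℕ) (f : ∀ i, V i →ₗ[F] V (i + 1)) (W : ∀ i, Submodule F (V i))
    (hW : ∀ i, i < N → Submodule.map (f i) (W i) ≤ W (i + 1)) :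
    ∃! m : ℕ → ℕ → ℕ,
      (∀ a b, ¬(a ≤ b ∧ b ≤ N) → m a b = 0) ∧
      ∀ i j, i ≤ j → j ≤ N →
        finrank F (Submodule.map (pcomp f i (j - i)) (W i)) =
          ∑ a ∈ Finset.range (i + 1), ∑ b ∈ Finset.Icc j N, m a b := by
  have hprop : ∀ μ : ℕ → ℕ → ℕ,
      ((∀ a b, ¬(a ≤ b ∧ b ≤ N) → μ a b = 0) ∧
       ∀ i j, i ≤ j → j ≤ N →
        finrank F (Submodule.map (pcomp f i (j - i)) (W i)) =
          ∑ a ∈ Finset.range (i + 1), ∑ b ∈ Finset.Icc j N, μ a b) →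
      ∀ i j, i ≤ j → j ≤ N →
        rk f W i j = ∑ a ∈ Finset.range (i + 1), ∑ b ∈ Finset.Icc j N, μ a b := by
    intro μ hμ i j hij hjN
    show finrank F (Tmod f W i j) = _
    rw [← finrank_pcomp_eq f W hij]
    exact hμ.2 i j hij hjN
  refine ⟨mk' f W N, ⟨?_, ?_⟩, ?_⟩
  · intro a b hab
    rw [mk', if_neg hab]
  · intro i j hij hjN
    rw [finrank_pcomp_eq f W hij]
    have := mk'_sum f W N hW hij hjN
    have h2 : ((∑ a ∈ Finset.range (i + 1), ∑ b ∈ Finset.Icc j N, mk' f W N a b : ℕ) : ℤ)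
        = (rk f W i j : ℤ) := by
      push_cast
      exact this
    exact_mod_cast h2.symm
  · intro μ hμ
    have hμ' := hprop μ hμ
    have hm' : ∀ i j, i ≤ j → j ≤ N →
        rk f W i j = ∑ a ∈ Finset.range (i + 1), ∑ b ∈ Finset.Icc j N, mk' f W N a b := by
      intro i j hij hjN
      have := mk'_sum f W N hW hij hjN
      exact_mod_cast this.symm
    funext a b
    by_cases hab : a ≤ b ∧ b ≤ N
    · have e1 := recover f W N μ hμ' hab.1 hab.2
      have e2 := recover f W N (mk' f W N) hm' hab.1 hab.2
      have : (μ a b : ℤ) = (mk' f W N a b : ℤ) := by rw [e1, e2]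
      exact_mod_cast this
    · rw [hμ.1 a b hab, mk', if_neg hab]
end

section
/- For a persistence module with rank function d^{i,j} = dim Im f^{i,j} (extended by 0 for out-of-range indices), if for all 0 ≤ i ≤ j ≤ N one has d^{i,j} = Σ_{a ≤ i, j ≤ b} m(a,b) for some function m : intervals → ℕ, then necessarily m(i,j) = d^{i,j} - d^{i-1,j} - d^{i,j+1} + d^{i-1,j+1} for all 0 ≤ i ≤ j ≤ N. -/
open Module

/-- **Uniqueness of barcode multiplicities.** If `m` is a multiset of intervals whose
counting function reproduces the rank function `d^{i,j}` of a persistence module, then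
necessarily `m(i,j) = d^{i,j} - d^{i-1,j} - d^{i,j+1} + d^{i-1,j+1}` on the range
`0 ≤ i ≤ j ≤ N`. -/
theorem persistence_barcode_multiplicity_formula {F : Type*} [Field F] {V : ℕ → Type*}
    [∀ i, AddCommGroup (V i)] [∀ i, Module F (V i)] [∀ i, FiniteDimensional F (V i)]
    (N : ℕ) (f : ∀ i, V i →ₗ[F] V (i + 1)) (m : ℤ → ℤ → ℕ)
    (hm : ∀ i j : ℤ, 0 ≤ i → i ≤ j → j ≤ N →
      prank N f i j = ∑ a ∈ Finset.Icc 0 i, ∑ b ∈ Finset.Icc j (N : ℤ), m a b) :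
    ∀ i j : ℤ, 0 ≤ i → i ≤ j → j ≤ N →
      (m i j : ℤ) = (prank N f i j : ℤ) - (prank N f (i - 1) j : ℤ)
        - (prank N f i (j + 1) : ℤ) + (prank N f (i - 1) (j + 1) : ℤ) := by
  intro i j hi hij hjN
  set S : ℤ → ℤ → ℕ := fun i j => ∑ a ∈ Finset.Icc 0 i, ∑ b ∈ Finset.Icc j (N : ℤ), m a b
    with hS
  -- rewrite each prank as S
  have e1 : prank N f i j = S i j := hm i j hi hij hjN
  have e2 : prank N f (i - 1) j = S (i - 1) j := by
    rcases eq_or_lt_of_le hi with h0 | h0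
    · have : Finset.Icc (0:ℤ) (i-1) = ∅ := by rw [Finset.Icc_eq_empty]; omega
      simp [prank, S, this, ← h0]
    · exact hm (i-1) j (by omega) (by omega) hjN
  have e3 : prank N f i (j + 1) = S i (j + 1) := by
    rcases eq_or_lt_of_le hjN with h0 | h0
    · have : Finset.Icc (j+1) (N:ℤ) = ∅ := by rw [Finset.Icc_eq_empty]; omega
      simp [prank, S, this, h0]
    · exact hm i (j+1) hi (by omega) (by omega)
  have e4 : prank N f (i - 1) (j + 1) = S (i - 1) (j + 1) := by
    rcases eq_or_lt_of_le hi with h0 | h0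
    · have : Finset.Icc (0:ℤ) (i-1) = ∅ := by rw [Finset.Icc_eq_empty]; omega
      simp [prank, S, this, ← h0]
    · rcases eq_or_lt_of_le hjN with h1 | h1
      · have : Finset.Icc (j+1) (N:ℤ) = ∅ := by rw [Finset.Icc_eq_empty]; omega
        simp [prank, S, this, h1]
      · exact hm (i-1) (j+1) (by omega) (by omega) (by omega)
  rw [e1, e2, e3, e4]
  -- splitting lemmas
  set T : ℤ → ℤ → ℕ := fun i j => ∑ b ∈ Finset.Icc j (N : ℤ), m i b with hT
  have split1 : ∀ k : ℤ, S i k = S (i-1) k + T i k := by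
    intro k
    have hins : Finset.Icc (0:ℤ) i = insert i (Finset.Icc 0 (i-1)) := by
      ext x; simp; omega
    simp only [S, hins]
    rw [Finset.sum_insert (by simp)]
    ring
  have split2 : T i j = m i j + T i (j+1) := by
    have hins : Finset.Icc j (N:ℤ) = insert j (Finset.Icc (j+1) N) := by
      ext x; simp; omega
    simp only [T, hins]
    rw [Finset.sum_insert (by simp)]
  have split3 : S i (j+1) = S (i-1) (j+1) + T i (j+1) := split1 (j+1)
  have := split1 j
  push_cast [this, split2, split3]
  ring
end
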